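/- Let n ≥ 2 and let B be a finite set of affine hyperplanes in ℝ^n that is stable under the coordinate-permutation action of S_n (i.e., σ(H) ∈ B for every σ ∈ S_n and H ∈ B), and such that no element of B equals any braid hyperplane W_{pq} = {x ∈ ℝ^n : x_p = x_q}, 1 ≤ p < q ≤ n. Let C = B ∪ {W_{pq} : 1 ≤ p < q ≤ n}. Then the number of connected components of ℝ^n ∖ ⋃_{H ∈ C} H equals n! times the number of S_n-orbits of the set of connected components of ℝ^n ∖ ⋃_{H ∈ B} H. -/

import Mathlib

/-- An affine hyperplane in ℝ^d: a set of the form {x : ⟨w,x⟩ = c} with w ≠ 0. -/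
def IsHyperplane {d : ℕ} (H : Set (Fin d → ℝ)) : Prop :=
  ∃ w : Fin d → ℝ, w ≠ 0 ∧ ∃ c : ℝ, H = {x | ∑ i, w i * x i = c}

/-- The set of connected components of a subset `S` of a topological space. -/
def components {X : Type*} [TopologicalSpace X] (S : Set X) : Set (Set X) :=
  {C | ∃ x ∈ S, C = connectedComponentIn S x}

/-- The coordinate-permutation action of `S_n` on ℝ^n: `(σ·x)_j = x_{σ⁻¹(j)}`. -/
def permAct {n : ℕ} (σ : Equiv.Perm (Fin n)) (x : Fin n → ℝ) : Fin n → ℝ :=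
  fun j => x (σ⁻¹ j)

/-- The `S_n`-orbits of a collection of subsets of ℝ^n under the coordinate-permutation
action. -/
def orbitsOf {n : ℕ} (comps : Set (Set (Fin n → ℝ))) : Set (Set (Set (Fin n → ℝ))) :=
  (fun C => {C' | ∃ σ : Equiv.Perm (Fin n), C' = permAct σ '' C}) '' comps

namespace KTTaux

open Set

variable {n : ℕ}


open Set

variable {n : ℕ}

lemma permAct_mul (σ τ : Equiv.Perm (Fin n)) (x : Fin n → ℝ) :
    permAct (σ * τ) x = permAct σ (permAct τ x) := by
  funext j; simp [permAct]

lemma permAct_one (x : Fin n → ℝ) : permAct 1 x = x := rfl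

lemma permAct_left_inv (σ : Equiv.Perm (Fin n)) (x : Fin n → ℝ) :
    permAct σ⁻¹ (permAct σ x) = x := by
  rw [← permAct_mul, inv_mul_cancel, permAct_one]

lemma permAct_right_inv (σ : Equiv.Perm (Fin n)) (x : Fin n → ℝ) :
    permAct σ (permAct σ⁻¹ x) = x := by
  rw [← permAct_mul, mul_inv_cancel, permAct_one]

lemma continuous_permAct (σ : Equiv.Perm (Fin n)) : Continuous (permAct σ) :=
  continuous_pi fun j => continuous_apply (σ⁻¹ j)

/-- `permAct σ` as a homeomorphism. -/
def permHomeo (σ : Equiv.Perm (Fin n)) : (Fin n → ℝ) ≃ₜ (Fin n → ℝ) where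
  toFun := permAct σ
  invFun := permAct σ⁻¹
  left_inv x := permAct_left_inv σ x
  right_inv x := permAct_right_inv σ x
  continuous_toFun := continuous_permAct σ
  continuous_invFun := continuous_permAct σ⁻¹

lemma permAct_image_mul (σ τ : Equiv.Perm (Fin n)) (s : Set (Fin n → ℝ)) :
    permAct (σ * τ) '' s = permAct σ '' (permAct τ '' s) := by
  rw [show permAct (σ * τ) = permAct σ ∘ permAct τ from funext (permAct_mul σ τ), Set.image_comp]

lemma permAct_injective (σ : Equiv.Perm (Fin n)) : Function.Injective (permAct σ) :=
  (permHomeo σ).injective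

lemma permAct_ccIn (σ : Equiv.Perm (Fin n)) {M : Set (Fin n → ℝ)} {x : Fin n → ℝ} (hx : x ∈ M) :
    permAct σ '' connectedComponentIn M x
      = connectedComponentIn (permAct σ '' M) (permAct σ x) :=
  (permHomeo σ).image_connectedComponentIn hx



open Set

variable {n : ℕ}

lemma sign_const {s : Set (Fin n → ℝ)} (hs : IsPreconnected s) {f : (Fin n → ℝ) → ℝ}
    (hf : Continuous f) (h0 : ∀ y ∈ s, f y ≠ 0) {a b : Fin n → ℝ}
    (ha : a ∈ s) (hb : b ∈ s) : 0 < f a * f b := by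
  rcases lt_or_gt_of_ne (h0 a ha) with hA | hA <;> rcases lt_or_gt_of_ne (h0 b hb) with hB | hB
  · exact mul_pos_of_neg_of_neg hA hB
  · exfalso
    obtain ⟨y, hy, hy0⟩ := hs.intermediate_value ha hb hf.continuousOn ⟨hA.le, hB.le⟩
    exact h0 y hy hy0
  · exfalso
    obtain ⟨y, hy, hy0⟩ := hs.intermediate_value hb ha hf.continuousOn ⟨hB.le, hA.le⟩
    exact h0 y hy hy0
  · exact mul_pos hA hB

lemma continuous_fsum (w : Fin n → ℝ) (c : ℝ) :
    Continuous (fun y : Fin n → ℝ => (∑ i, w i * y i) - c) :=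
  (continuous_finset_sum _ fun i _ => continuous_const.mul (continuous_apply i)).sub
    continuous_const

lemma fsum_combo (w : Fin n → ℝ) (θ₁ θ₂ : ℝ) (y₁ y₂ : Fin n → ℝ) :
    (∑ i, w i * (θ₁ • y₁ + θ₂ • y₂) i) = θ₁ * ∑ i, w i * y₁ i + θ₂ * ∑ i, w i * y₂ i := by
  simp only [Pi.add_apply, Pi.smul_apply, smul_eq_mul]
  rw [Finset.mul_sum, Finset.mul_sum, ← Finset.sum_add_distrib]
  exact Finset.sum_congr rfl fun i _ => by ring

lemma combo_pos {θ₁ θ₂ u v : ℝ} (h1 : 0 ≤ θ₁) (h2 : 0 ≤ θ₂) (h12 : θ₁ + θ₂ = 1)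
    (hu : 0 < u) (hv : 0 < v) : 0 < θ₁ * u + θ₂ * v := by
  rcases eq_or_lt_of_le h1 with h | h
  · have : θ₂ = 1 := by linarith
    rw [← h, this]; simpa using hv
  · have := mul_pos h hu
    nlinarith [mul_nonneg h2 hv.le]

/-- Chambers of a hyperplane arrangement are convex: the segment between two points of a
connected component of the complement stays in the component. -/
lemma segment_subset_chamber {B : Set (Set (Fin n → ℝ))} (hhyp : ∀ H ∈ B, IsHyperplane H)
    {x a b : Fin n → ℝ} (ha : a ∈ connectedComponentIn (⋃₀ B)ᶜ x)
    (hb : b ∈ connectedComponentIn (⋃₀ B)ᶜ x) :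
    segment ℝ a b ⊆ connectedComponentIn (⋃₀ B)ᶜ x := by
  classical
  set M := (⋃₀ B)ᶜ with hM
  set D := connectedComponentIn M x with hD
  have hDM : D ⊆ M := connectedComponentIn_subset M x
  set T : Set (Fin n → ℝ) :=
    ⋂ (H ∈ B) (w : Fin n → ℝ) (c : ℝ),
      {y | w ≠ 0 → H = {v | ∑ i, w i * v i = c} →
        0 < ((∑ i, w i * a i) - c) * ((∑ i, w i * y i) - c)} with hT
  have hmemT : ∀ y, y ∈ T ↔ ∀ H ∈ B, ∀ (w : Fin n → ℝ) (c : ℝ), w ≠ 0 →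
      H = {v | ∑ i, w i * v i = c} →
      0 < ((∑ i, w i * a i) - c) * ((∑ i, w i * y i) - c) := by
    intro y; simp [hT]
  have hTconv : Convex ℝ T := by
    apply convex_iInter; intro H; apply convex_iInter; intro hH
    apply convex_iInter; intro w; apply convex_iInter; intro c
    intro y₁ hy₁ y₂ hy₂ θ₁ θ₂ hθ₁ hθ₂ hθ
    intro hw hHeq
    have h1 := hy₁ hw hHeq
    have h2 := hy₂ hw hHeq
    rw [fsum_combo]
    have : ((∑ i, w i * a i) - c) * ((θ₁ * ∑ i, w i * y₁ i + θ₂ * ∑ i, w i * y₂ i) - c)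
        = θ₁ * (((∑ i, w i * a i) - c) * ((∑ i, w i * y₁ i) - c))
          + θ₂ * (((∑ i, w i * a i) - c) * ((∑ i, w i * y₂ i) - c)) := by
      have : θ₂ = 1 - θ₁ := by linarith
      subst this; ring
    rw [this]
    exact combo_pos hθ₁ hθ₂ hθ h1 h2
  have haM : a ∈ M := hDM ha
  have haT : a ∈ T := by
    rw [hmemT]
    intro H hH w c hw hHeq
    have : (∑ i, w i * a i) ≠ c := by
      intro hc
      exact haM ⟨H, hH, by rw [hHeq]; exact hc⟩
    exact mul_self_pos.mpr (sub_ne_zero.mpr this)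
  have hbT : b ∈ T := by
    rw [hmemT]
    intro H hH w c hw hHeq
    refine sign_const isPreconnected_connectedComponentIn (continuous_fsum w c) ?_ ha hb
    intro y hy hy0
    exact hDM hy ⟨H, hH, by rw [hHeq]; exact sub_eq_zero.mp hy0⟩
  have hTM : T ⊆ M := by
    intro y hy
    intro hyU
    obtain ⟨H, hH, hyH⟩ := hyU
    obtain ⟨w, hw, c, hHeq⟩ := hhyp H hH
    have := (hmemT y).mp hy H hH w c hw hHeq
    rw [hHeq] at hyH
    simp only [Set.mem_setOf_eq] at hyH
    rw [hyH] at this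
    simp at this
  have hTD : T ⊆ D := by
    have h1 : T ⊆ connectedComponentIn M a :=
      hTconv.isPreconnected.subset_connectedComponentIn haT hTM
    rwa [← connectedComponentIn_eq ha] at h1
  exact fun y hy => hTD (hTconv.segment_subset haT hbT hy)



open Set

variable {n : ℕ}

lemma strictMono_range_unique {m : ℕ} {f g : Fin m → ℝ} (hf : StrictMono f)
    (hg : StrictMono g) (h : Set.range f = Set.range g) : f = g := by
  suffices hk : ∀ k : ℕ, ∀ i : Fin m, (i : ℕ) < k → f i = g i by
    funext i; exact hk ((i : ℕ) + 1) i (Nat.lt_succ_self _)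
  intro k
  induction k with
  | zero => intro i hi; omega
  | succ k IH =>
    intro i hi
    rcases Nat.lt_or_ge (i : ℕ) k with hik | hik
    · exact IH i hik
    have hik' : (i : ℕ) = k := by omega
    rcases lt_trichotomy (f i) (g i) with hlt | heq | hgt
    · exfalso
      have : f i ∈ Set.range g := h ▸ Set.mem_range_self i
      obtain ⟨j, hj⟩ := this
      have hji : j < i := hg.lt_iff_lt.mp (by rw [hj]; exact hlt)
      have : f j = g j := IH j (by omega)
      rw [hj] at this
      exact absurd (hf.injective this) (ne_of_lt hji)
    · exact heq
    · exfalso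
      have : g i ∈ Set.range f := h.symm ▸ Set.mem_range_self i
      obtain ⟨j, hj⟩ := this
      have hji : j < i := hf.lt_iff_lt.mp (by rw [hj]; exact hgt)
      have : f j = g j := IH j (by omega)
      rw [hj] at this
      exact absurd (hg.injective this) (ne_of_gt hji)

lemma range_comp_perm (x : Fin n → ℝ) (σ : Equiv.Perm (Fin n)) :
    Set.range (x ∘ ⇑σ) = Set.range x := by
  rw [Set.range_comp, Equiv.range_eq_univ, Set.image_univ]

lemma strictMono_sort {x : Fin n → ℝ} (hx : Function.Injective x) :
    StrictMono (x ∘ ⇑(Tuple.sort x)) :=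
  (Tuple.monotone_sort x).strictMono_of_injective (hx.comp (Equiv.injective _))

lemma sort_eq_of_strictMono {x : Fin n → ℝ} (hx : Function.Injective x)
    {σ : Equiv.Perm (Fin n)} (hσ : StrictMono (x ∘ ⇑σ)) : Tuple.sort x = σ := by
  have h1 : StrictMono (x ∘ ⇑(Tuple.sort x)) := strictMono_sort hx
  have h2 : x ∘ ⇑(Tuple.sort x) = x ∘ ⇑σ :=
    strictMono_range_unique h1 hσ (by rw [range_comp_perm, range_comp_perm])
  exact Equiv.ext fun i => hx (congrFun h2 i)

lemma perm_eq_of_order {z : Fin n → ℝ} (hz : Function.Injective z) {a b : Equiv.Perm (Fin n)}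
    (h : ∀ p q, z (a p) < z (a q) ↔ z (b p) < z (b q)) : a = b := by
  set ρ := Tuple.sort (z ∘ ⇑a) with hρ
  have hinj : Function.Injective (z ∘ ⇑a) := hz.comp (Equiv.injective _)
  have h1 : StrictMono ((z ∘ ⇑a) ∘ ⇑ρ) := strictMono_sort hinj
  have h1' : StrictMono (z ∘ ⇑(a * ρ)) := by
    convert h1 using 1
    rfl
  have h2' : StrictMono (z ∘ ⇑(b * ρ)) := by
    intro i j hij
    have := h1 hij
    simp only [Function.comp_apply] at this ⊢
    exact (h (ρ i) (ρ j)).mp this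
  have := (sort_eq_of_strictMono hz h1').symm.trans (sort_eq_of_strictMono hz h2')
  exact mul_right_cancel this



open Set

variable {n : ℕ}

lemma exists_inj_mem {U : Set (Fin n → ℝ)} (hU : IsOpen U) (hne : U.Nonempty) :
    ∃ y ∈ U, Function.Injective y := by
  classical
  obtain ⟨y₀, hy₀⟩ := hne
  obtain ⟨ε, hε, hball⟩ := Metric.isOpen_iff.mp hU y₀ hy₀
  set bad : Set ℝ :=
    {t : ℝ | ∃ p q : Fin n, p ≠ q ∧ y₀ p + t * ((p : ℕ) : ℝ) = y₀ q + t * ((q : ℕ) : ℝ)}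
    with hbad
  have hbadfin : bad.Finite := by
    have hsub : bad ⊆ ⋃ pq ∈ (Finset.univ.offDiag : Finset (Fin n × Fin n)),
        {t : ℝ | y₀ pq.1 + t * ((pq.1 : ℕ) : ℝ) = y₀ pq.2 + t * ((pq.2 : ℕ) : ℝ)} := by
      rintro t ⟨p, q, hpq, ht⟩
      refine Set.mem_biUnion (x := (p, q)) ?_ ht
      exact Finset.mem_offDiag.mpr ⟨Finset.mem_univ _, Finset.mem_univ _, hpq⟩
    refine Set.Finite.subset (Set.Finite.biUnion (Finset.finite_toSet _) fun pq hpq => ?_) hsub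
    have hne' : ((pq.1 : ℕ) : ℝ) ≠ ((pq.2 : ℕ) : ℝ) := by
      simp only [Finset.coe_offDiag, Set.mem_offDiag, Finset.coe_univ] at hpq
      exact_mod_cast fun h => hpq.2.2 (Fin.val_injective h)
    apply Set.Subsingleton.finite
    intro t₁ h₁ t₂ h₂
    simp only [Set.mem_setOf_eq] at h₁ h₂
    have : t₁ * (((pq.1 : ℕ) : ℝ) - ((pq.2 : ℕ) : ℝ))
        = t₂ * (((pq.1 : ℕ) : ℝ) - ((pq.2 : ℕ) : ℝ)) := by linarith
    exact mul_right_cancel₀ (sub_ne_zero.mpr hne') this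
  set δ : ℝ := ε / (n + 1) with hδ
  have hδpos : 0 < δ := by positivity
  obtain ⟨t, ht⟩ := ((Set.Ioo_infinite hδpos).diff hbadfin).nonempty
  obtain ⟨⟨ht0, htδ⟩, htbad⟩ := ht
  refine ⟨fun i => y₀ i + t * ((i : ℕ) : ℝ), ?_, ?_⟩
  · apply hball
    rw [Metric.mem_ball, dist_pi_lt_iff hε]
    intro i
    rw [Real.dist_eq]
    have hi : ((i : ℕ) : ℝ) < (n : ℝ) + 1 := by
      have := i.2
      push_cast
      exact_mod_cast lt_trans (Nat.cast_lt.mpr this) (by linarith)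
    have heq : y₀ i + t * ((i : ℕ) : ℝ) - y₀ i = t * ((i : ℕ) : ℝ) := by ring
    rw [heq, abs_of_nonneg (by positivity)]
    calc t * ((i : ℕ) : ℝ) < δ * ((n : ℝ) + 1) := by
          apply mul_lt_mul' htδ.le hi (by positivity) hδpos
      _ = ε := by rw [hδ, div_mul_cancel₀ _ (by positivity)]
  · intro i j hij
    by_contra hne'
    exact htbad ⟨i, j, hne', hij⟩



open Set

variable {n : ℕ}

lemma sUnion_stable {B : Set (Set (Fin n → ℝ))}
    (hstable : ∀ σ : Equiv.Perm (Fin n), ∀ H ∈ B, permAct σ '' H ∈ B)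
    (σ : Equiv.Perm (Fin n)) : permAct σ '' ⋃₀ B = ⋃₀ B := by
  apply subset_antisymm
  · rintro y ⟨x, ⟨H, hH, hx⟩, rfl⟩
    exact ⟨permAct σ '' H, hstable σ H hH, Set.mem_image_of_mem _ hx⟩
  · rintro y ⟨H, hH, hy⟩
    refine ⟨permAct σ⁻¹ y, ⟨permAct σ⁻¹ '' H, hstable σ⁻¹ H hH, Set.mem_image_of_mem _ hy⟩, ?_⟩
    rw [← permAct_mul, mul_inv_cancel, permAct_one]

lemma permAct_bijective (σ : Equiv.Perm (Fin n)) : Function.Bijective (permAct σ) := by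
  constructor
  · intro a b h
    have := congrArg (permAct σ⁻¹) h
    rwa [← permAct_mul, ← permAct_mul, inv_mul_cancel, permAct_one, permAct_one] at this
  · intro y
    exact ⟨permAct σ⁻¹ y, by rw [← permAct_mul, mul_inv_cancel, permAct_one]⟩

lemma compl_stable {B : Set (Set (Fin n → ℝ))}
    (hstable : ∀ σ : Equiv.Perm (Fin n), ∀ H ∈ B, permAct σ '' H ∈ B)
    (σ : Equiv.Perm (Fin n)) : permAct σ '' (⋃₀ B)ᶜ = (⋃₀ B)ᶜ := by
  rw [Set.image_compl_eq (permAct_bijective σ), sUnion_stable hstable σ]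

/-- Core gallery induction: any two injective points of a chamber `D` of the stable
arrangement can be matched by a permutation stabilizing `D`. -/
lemma core {B : Set (Set (Fin n → ℝ))} (hhyp : ∀ H ∈ B, IsHyperplane H)
    (hstable : ∀ σ : Equiv.Perm (Fin n), ∀ H ∈ B, permAct σ '' H ∈ B) :
    ∀ (k : ℕ) (x z : Fin n → ℝ), x ∈ (⋃₀ B)ᶜ →
      z ∈ connectedComponentIn (⋃₀ B)ᶜ x →
      Function.Injective x → Function.Injective z →
      (Finset.univ.filter
        (fun pq : Fin n × Fin n => z pq.1 < z pq.2 ∧ x pq.2 < x pq.1)).card = k →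
      ∃ υ : Equiv.Perm (Fin n),
        permAct υ '' connectedComponentIn (⋃₀ B)ᶜ x = connectedComponentIn (⋃₀ B)ᶜ x ∧
        ∀ p q, permAct υ z p < permAct υ z q ↔ x p < x q := by
  intro k
  induction k using Nat.strong_induction_on with
  | _ k IH =>
  intro x z hxM hzD hxinj hzinj hcard
  classical
  set M := (⋃₀ B)ᶜ with hMdef
  set D := connectedComponentIn M x with hDdef
  set S := (Finset.univ.filter
      (fun pq : Fin n × Fin n => z pq.1 < z pq.2 ∧ x pq.2 < x pq.1)) with hSdef
  by_cases hS0 : S = ∅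
  · refine ⟨1, ?_, ?_⟩
    · rw [show permAct (1 : Equiv.Perm (Fin n)) = id from funext permAct_one, Set.image_id]
    · intro p q
      rw [permAct_one]
      constructor
      · intro h
        by_contra hcon
        have hpq : p ≠ q := fun he => lt_irrefl _ (he ▸ h)
        have hx' : x q < x p :=
          lt_of_le_of_ne (not_lt.mp hcon) fun he => hpq (hxinj he.symm)
        have : (p, q) ∈ S := Finset.mem_filter.mpr ⟨Finset.mem_univ _, h, hx'⟩
        rw [hS0] at this
        exact absurd this (Finset.notMem_empty _)
      · intro h
        by_contra hcon
        have hpq : p ≠ q := fun he => lt_irrefl _ (he ▸ h)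
        have hz' : z q < z p :=
          lt_of_le_of_ne (not_lt.mp hcon) fun he => hpq (hzinj he.symm)
        have : (q, p) ∈ S := Finset.mem_filter.mpr ⟨Finset.mem_univ _, hz', h⟩
        rw [hS0] at this
        exact absurd this (Finset.notMem_empty _)
  -- nonempty case
  obtain ⟨pq, hpqS, hmin⟩ := Finset.exists_min_image S (fun pq => z pq.2 - z pq.1)
    (Finset.nonempty_of_ne_empty hS0)
  obtain ⟨p, q⟩ := pq
  obtain ⟨-, hzpq, hxqp⟩ := Finset.mem_filter.mp hpqS
  have hpne : p ≠ q := fun h => lt_irrefl _ (h ▸ hzpq)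
  -- adjacency
  have hadj : ∀ r, r ≠ p → r ≠ q → z r < z p ∨ z q < z r := by
    intro r hrp hrq
    by_contra hcon
    push_neg at hcon
    obtain ⟨h1, h2⟩ := hcon
    have hzpr : z p < z r := lt_of_le_of_ne h1 fun he => hrp (hzinj he.symm)
    have hzrq : z r < z q := lt_of_le_of_ne h2 fun he => hrq (hzinj he)
    rcases lt_or_gt_of_ne (fun he : x r = x p => hrp (hxinj he)) with hxc | hxc
    · have hmem : (p, r) ∈ S := Finset.mem_filter.mpr ⟨Finset.mem_univ _, hzpr, hxc⟩
      have := hmin (p, r) hmem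
      simp only at this
      linarith
    · have hmem : (r, q) ∈ S := Finset.mem_filter.mpr
        ⟨Finset.mem_univ _, hzrq, lt_trans hxqp hxc⟩
      have := hmin (r, q) hmem
      simp only at this
      linarith
  have hAzr : ∀ r, r ≠ p → r ≠ q → ((z r < z p ↔ z r < z q) ∧ (z p < z r ↔ z q < z r)) := by
    intro r hrp hrq
    rcases hadj r hrp hrq with h | h <;>
      exact ⟨⟨fun hh => by linarith, fun hh => by linarith⟩,
        ⟨fun hh => by linarith, fun hh => by linarith⟩⟩
  -- crossing point on the segment from x to z
  have hxD : x ∈ D := mem_connectedComponentIn hxM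
  have hseg : segment ℝ x z ⊆ D := segment_subset_chamber hhyp hxD hzD
  set ψ : ℝ → ℝ := fun t => (x p + t * (z p - x p)) - (x q + t * (z q - x q)) with hψdef
  have hψcont : ContinuousOn ψ (Set.Icc (0:ℝ) 1) := by fun_prop
  have hψ0 : ψ 0 = x p - x q := by simp [hψdef]
  have hψ1 : ψ 1 = z p - z q := by simp [hψdef]
  have h0mem : (0:ℝ) ∈ Set.Icc (ψ 1) (ψ 0) := by
    rw [hψ0, hψ1]; constructor <;> [linarith; linarith]
  obtain ⟨t₀, ht₀, hψt₀⟩ := intermediate_value_Icc' (by norm_num : (0:ℝ) ≤ 1) hψcont h0mem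
  set u : Fin n → ℝ := x + t₀ • (z - x) with hudef
  have hu : u ∈ D := by
    apply hseg
    rw [segment_eq_image']
    exact ⟨t₀, ht₀, rfl⟩
  have hupq : u p = u q := by
    have : ψ t₀ = 0 := hψt₀
    simp only [hψdef] at this
    simp only [hudef, Pi.add_apply, Pi.smul_apply, Pi.sub_apply, smul_eq_mul]
    linarith
  set s : Equiv.Perm (Fin n) := Equiv.swap p q with hsdef
  have hsu : permAct s u = u := by
    funext j
    show u (s⁻¹ j) = u j
    rw [hsdef, Equiv.swap_inv]
    rcases eq_or_ne j p with rfl | hjp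
    · rw [Equiv.swap_apply_left]; exact hupq.symm
    rcases eq_or_ne j q with rfl | hjq
    · rw [Equiv.swap_apply_right]; exact hupq
    · rw [Equiv.swap_apply_of_ne_of_ne hjp hjq]
  have huM : u ∈ M := connectedComponentIn_subset _ _ hu
  have hDu : D = connectedComponentIn M u := connectedComponentIn_eq hu
  have hsD : permAct s '' D = D := by
    rw [hDu, permAct_ccIn s huM]
    rw [hMdef] at huM ⊢
    rw [compl_stable hstable s, hsu]
  set z' : Fin n → ℝ := permAct s z with hz'def
  have hz'D : z' ∈ D := by
    rw [← hsD]
    exact Set.mem_image_of_mem _ hzD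
  have hz'app : ∀ j, z' j = z (s j) := by
    intro j
    show z (s⁻¹ j) = z (s j)
    rw [hsdef, Equiv.swap_inv]
  have hz'inj : Function.Injective z' := by
    intro a b h
    rw [hz'app, hz'app] at h
    exact (Equiv.injective s) (hzinj h)
  -- the mismatch set shrinks
  have K : ∀ a b : Fin n, (a, b) ≠ (p, q) →
      ((z (s a) < z (s b) ∧ x b < x a) ↔ (z a < z b ∧ x b < x a)) := by
    intro a b hne
    by_cases hap : a = p
    · by_cases hbq : b = q
      · exact absurd (by rw [hap, hbq]) hne
      · by_cases hbp : b = p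
        · rw [hap, hbp]
          constructor <;> (rintro ⟨h1, -⟩; exact absurd h1 (lt_irrefl _))
        · rw [hap, hsdef, Equiv.swap_apply_left, Equiv.swap_apply_of_ne_of_ne hbp hbq]
          exact and_congr_left fun _ => ((hAzr b hbp hbq).2).symm
    · by_cases haq : a = q
      · by_cases hbp : b = p
        · rw [haq, hbp, hsdef, Equiv.swap_apply_right, Equiv.swap_apply_left]
          constructor
          · rintro ⟨-, h2⟩; exact absurd h2 (asymm hxqp)
          · rintro ⟨h1, -⟩; exact absurd h1 (asymm hzpq)
        · by_cases hbq : b = q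
          · rw [haq, hbq]
            constructor <;> (rintro ⟨h1, -⟩; exact absurd h1 (lt_irrefl _))
          · rw [haq, hsdef, Equiv.swap_apply_right, Equiv.swap_apply_of_ne_of_ne hbp hbq]
            exact and_congr_left fun _ => (hAzr b hbp hbq).2
      · rw [hsdef, Equiv.swap_apply_of_ne_of_ne hap haq]
        by_cases hbp : b = p
        · rw [hbp, Equiv.swap_apply_left]
          exact and_congr_left fun _ => ((hAzr a hap haq).1).symm
        · by_cases hbq : b = q
          · rw [hbq, Equiv.swap_apply_right]
            exact and_congr_left fun _ => (hAzr a hap haq).1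
          · rw [Equiv.swap_apply_of_ne_of_ne hbp hbq]
  have hS' : (Finset.univ.filter
      (fun ab : Fin n × Fin n => z' ab.1 < z' ab.2 ∧ x ab.2 < x ab.1)) = S.erase (p, q) := by
    ext ⟨a, b⟩
    simp only [Finset.mem_filter, Finset.mem_erase, Finset.mem_univ, true_and, hSdef]
    rw [hz'app a, hz'app b]
    by_cases hne2 : (a, b) = (p, q)
    · obtain ⟨ha', hb'⟩ : a = p ∧ b = q := Prod.mk_inj.mp hne2
      rw [ha', hb', hsdef, Equiv.swap_apply_left, Equiv.swap_apply_right]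
      constructor
      · rintro ⟨h1, -⟩; exact absurd h1 (asymm hzpq)
      · rintro ⟨h, -⟩; exact absurd rfl h
    · constructor
      · intro h; exact ⟨hne2, (K a b hne2).mp h⟩
      · rintro ⟨-, h⟩; exact (K a b hne2).mpr h
  have hkpos : 0 < k := by
    rw [← hcard]
    exact Finset.card_pos.mpr (Finset.nonempty_of_ne_empty hS0)
  have hcard' : (Finset.univ.filter
      (fun ab : Fin n × Fin n => z' ab.1 < z' ab.2 ∧ x ab.2 < x ab.1)).card = k - 1 := by
    rw [hS', Finset.card_erase_of_mem hpqS, hcard]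
  obtain ⟨υ', hυ'D, hυ'ord⟩ := IH (k - 1) (Nat.sub_lt hkpos one_pos) x z' hxM hz'D hxinj
    hz'inj hcard'
  refine ⟨υ' * s, ?_, ?_⟩
  · rw [permAct_image_mul]
    rw [hsD]
    exact hυ'D
  · intro p' q'
    rw [permAct_mul, ← hz'def]
    exact hυ'ord p' q'



open Set

variable {n : ℕ}

lemma ordering_const {s : Set (Fin n → ℝ)} (hs : IsPreconnected s)
    (hinj : ∀ v ∈ s, Function.Injective v) {a b : Fin n → ℝ}
    (ha : a ∈ s) (hb : b ∈ s) {p q : Fin n} (h : a p < a q) : b p < b q := by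
  have hpq : p ≠ q := fun he => lt_irrefl _ (he ▸ h)
  have hcont : Continuous (fun v : Fin n → ℝ => v q - v p) :=
    (continuous_apply q).sub (continuous_apply p)
  have h0 : ∀ y ∈ s, y q - y p ≠ 0 := fun y hy h0 =>
    hpq (hinj y hy (sub_eq_zero.mp h0)).symm
  have hprod := sign_const hs hcont h0 ha hb
  rcases mul_pos_iff.mp hprod with ⟨-, h2⟩ | ⟨h1, -⟩
  · linarith
  · linarith

lemma convex_weyl (σ : Equiv.Perm (Fin n)) :
    Convex ℝ {v : Fin n → ℝ | StrictMono (v ∘ ⇑σ)} := by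
  intro v₁ h₁ v₂ h₂ θ₁ θ₂ hθ₁ hθ₂ hθ
  intro i j hij
  have l1 := h₁ hij
  have l2 := h₂ hij
  simp only [Function.comp_apply, Pi.add_apply, Pi.smul_apply, smul_eq_mul] at l1 l2 ⊢
  have := combo_pos hθ₁ hθ₂ hθ (sub_pos.mpr l1) (sub_pos.mpr l2)
  nlinarith

lemma weyl_inj {σ : Equiv.Perm (Fin n)} {v : Fin n → ℝ} (hv : StrictMono (v ∘ ⇑σ)) :
    Function.Injective v := by
  intro i j h
  have h2 : (v ∘ ⇑σ) (σ⁻¹ i) = (v ∘ ⇑σ) (σ⁻¹ j) := by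
    simp only [Function.comp_apply, Equiv.Perm.coe_inv, Equiv.apply_symm_apply]
    exact h
  have := hv.injective h2
  simpa using congrArg σ this


end KTTaux
/-- (Kamiya–Takemura–Terao) For an `S_n`-stable arrangement `B` avoiding the braid
hyperplanes, the number of chambers of `C = B ∪ {braid hyperplanes}` equals `n!` times the
number of `S_n`-orbits of chambers of `B`. -/
theorem orbit_counting (n : ℕ) (hn : 2 ≤ n) (B : Set (Set (Fin n → ℝ)))
    (hBfin : B.Finite) (hhyp : ∀ H ∈ B, IsHyperplane H)
    (hstable : ∀ σ : Equiv.Perm (Fin n), ∀ H ∈ B, permAct σ '' H ∈ B)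
    (hbraid : ∀ H ∈ B, ∀ p q : Fin n, p ≠ q → H ≠ {x | x p = x q}) :
    (components ((⋃₀ (B ∪ {W | ∃ p q : Fin n, p ≠ q ∧ W = {x | x p = x q}}))ᶜ)).ncard =
      n.factorial * (orbitsOf (components ((⋃₀ B)ᶜ))).ncard := by
  classical
  open KTTaux in
  set Br : Set (Set (Fin n → ℝ)) := {W | ∃ p q : Fin n, p ≠ q ∧ W = {x | x p = x q}}
    with hBrdef
  set MB : Set (Fin n → ℝ) := (⋃₀ B)ᶜ with hMBdef
  set MC : Set (Fin n → ℝ) := (⋃₀ (B ∪ Br))ᶜ with hMCdef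
  have hMC_eq : MC = MB ∩ (⋃₀ Br)ᶜ := by
    rw [hMCdef, Set.sUnion_union, Set.compl_union, hMBdef]
  have hmem_MC : ∀ v : Fin n → ℝ, v ∈ MC ↔ v ∈ MB ∧ Function.Injective v := by
    intro v
    rw [hMC_eq]
    constructor
    · rintro ⟨h1, h2⟩
      refine ⟨h1, ?_⟩
      intro i j hij
      by_contra hne
      exact h2 ⟨{x | x i = x j}, ⟨i, j, hne, rfl⟩, hij⟩
    · rintro ⟨h1, h2⟩
      refine ⟨h1, ?_⟩
      rintro ⟨W, hW, hvW⟩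
      obtain ⟨p, q, hpq, rfl⟩ := hW
      exact hpq (h2 hvW)
  have hMC_sub_MB : MC ⊆ MB := by rw [hMC_eq]; exact Set.inter_subset_left
  have hMBopen : IsOpen MB := by
    rw [hMBdef]
    have : IsClosed (⋃₀ B) := by
      rw [Set.sUnion_eq_biUnion]
      apply hBfin.isClosed_biUnion
      intro H hH
      obtain ⟨w, hw, c, rfl⟩ := hhyp H hH
      exact isClosed_eq
        (continuous_finset_sum _ fun i _ => continuous_const.mul (continuous_apply i))
        continuous_const
    exact this.isOpen_compl
  have hMBstab : ∀ ρ : Equiv.Perm (Fin n), permAct ρ '' MB = MB := by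
    intro ρ; rw [hMBdef]; exact compl_stable hstable ρ
  have hccIm : ∀ (ρ : Equiv.Perm (Fin n)) (x : Fin n → ℝ), x ∈ MB →
      permAct ρ '' connectedComponentIn MB x = connectedComponentIn MB (permAct ρ x) := by
    intro ρ x hx
    rw [permAct_ccIn ρ hx, hMBstab ρ]
  have horb_eq : ∀ (ρ : Equiv.Perm (Fin n)) (C : Set (Fin n → ℝ)),
      {C' : Set (Fin n → ℝ) | ∃ σ : Equiv.Perm (Fin n), C' = permAct σ '' (permAct ρ '' C)}
        = {C' : Set (Fin n → ℝ) | ∃ σ : Equiv.Perm (Fin n), C' = permAct σ '' C} := by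
    intro ρ C
    ext C'
    simp only [Set.mem_setOf_eq]
    constructor
    · rintro ⟨σ, rfl⟩
      exact ⟨σ * ρ, by rw [permAct_image_mul]⟩
    · rintro ⟨σ, rfl⟩
      exact ⟨σ * ρ⁻¹, by rw [← permAct_image_mul, inv_mul_cancel_right]⟩
  -- uniqueness of the chamber of an orbit meeting a Weyl chamber
  have huniq : ∀ (σ τ : Equiv.Perm (Fin n)) (x x' : Fin n → ℝ), x ∈ MB → x' ∈ MB →
      Function.Injective x → Function.Injective x' →
      StrictMono (x ∘ ⇑σ) → StrictMono (x' ∘ ⇑σ) →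
      x' ∈ permAct τ '' connectedComponentIn MB x →
      connectedComponentIn MB x' = connectedComponentIn MB x := by
    intro σ τ x x' hx hx' hxinj hx'inj hxs hx's hx'mem
    obtain ⟨z, hzD, hzx'⟩ := hx'mem
    have hzfun : ∀ j, x' (τ j) = z j := by
      intro j
      rw [← hzx']
      show z (τ⁻¹ (τ j)) = z j
      rw [Equiv.Perm.coe_inv, Equiv.symm_apply_apply]
    have hzinj : Function.Injective z := by
      intro i j hij
      rw [← hzfun, ← hzfun] at hij
      exact τ.injective (hx'inj hij)
    have hMBx : x ∈ (⋃₀ B)ᶜ := by rw [← hMBdef]; exact hx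
    obtain ⟨υ, hυD, hυord⟩ := core hhyp hstable _ x z hMBx hzD hxinj hzinj rfl
    have e1 : ∀ (v : Fin n → ℝ), StrictMono (v ∘ ⇑σ) → ∀ p q,
        (v p < v q ↔ σ⁻¹ p < σ⁻¹ q) := by
      intro v hv p q
      have h1 : v p = (v ∘ ⇑σ) (σ⁻¹ p) := by simp [Equiv.apply_symm_apply]
      have h2 : v q = (v ∘ ⇑σ) (σ⁻¹ q) := by simp [Equiv.apply_symm_apply]
      rw [h1, h2, hv.lt_iff_lt]
    have hord_x' : ∀ p q, x' p < x' q ↔ x p < x q := by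
      intro p q
      exact (e1 x' hx's p q).trans (e1 x hxs p q).symm
    have hυτ : υ = τ := by
      have hiff : ∀ p q, z (υ⁻¹ p) < z (υ⁻¹ q) ↔ z (τ⁻¹ p) < z (τ⁻¹ q) := by
        intro p q
        have l : z (υ⁻¹ p) < z (υ⁻¹ q) ↔ x p < x q := hυord p q
        have r : z (τ⁻¹ p) < z (τ⁻¹ q) ↔ x' p < x' q := by
          rw [← hzx']
          exact Iff.rfl
        rw [l, r]
        exact (hord_x' p q).symm
      have := perm_eq_of_order hzinj hiff
      exact inv_injective this
    have hx'D : x' ∈ connectedComponentIn MB x := by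
      have hx'eq : x' = permAct υ z := by rw [hυτ]; exact hzx'.symm
      rw [hx'eq, ← hυD]
      exact Set.mem_image_of_mem _ hzD
    exact (connectedComponentIn_eq hx'D).symm
  -- choose base points of chambers of MC
  have hpt : ∀ c : ↥(components MC), ∃ x, x ∈ MC ∧
      (c : Set (Fin n → ℝ)) = connectedComponentIn MC x := fun c => c.2
  choose pt hptMC hptc using hpt
  have hptMB : ∀ c, pt c ∈ MB := fun c => ((hmem_MC _).mp (hptMC c)).1
  have hptinj : ∀ c, Function.Injective (pt c) := fun c => ((hmem_MC _).mp (hptMC c)).2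
  have hccMC_inj : ∀ (x : Fin n → ℝ), ∀ v ∈ connectedComponentIn MC x,
      Function.Injective v :=
    fun x v hv => ((hmem_MC v).mp (connectedComponentIn_subset _ _ hv)).2
  -- the bijection
  set F : ↥(components MC) → Equiv.Perm (Fin n) × ↥(orbitsOf (components MB)) :=
    fun c => (Tuple.sort (pt c),
      ⟨{C' | ∃ σ : Equiv.Perm (Fin n), C' = permAct σ '' connectedComponentIn MB (pt c)},
        Set.mem_image_of_mem _ ⟨pt c, hptMB c, rfl⟩⟩) with hFdef
  have hFinj : Function.Injective F := by
    intro c c' heq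
    have h1 : Tuple.sort (pt c) = Tuple.sort (pt c') := congrArg Prod.fst heq
    have h2 : {C' | ∃ σ : Equiv.Perm (Fin n),
          C' = permAct σ '' connectedComponentIn MB (pt c)}
        = {C' | ∃ σ : Equiv.Perm (Fin n),
          C' = permAct σ '' connectedComponentIn MB (pt c')} :=
      congrArg (fun t : Equiv.Perm (Fin n) × ↥(orbitsOf (components MB)) =>
        (t.2 : Set (Set (Fin n → ℝ)))) heq
    have hc'mem : ∃ τ : Equiv.Perm (Fin n), connectedComponentIn MB (pt c')
        = permAct τ '' connectedComponentIn MB (pt c) := by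
      have hmem : connectedComponentIn MB (pt c') ∈ {C' | ∃ σ : Equiv.Perm (Fin n),
          C' = permAct σ '' connectedComponentIn MB (pt c')} :=
        ⟨1, by rw [show permAct (1 : Equiv.Perm (Fin n)) = id from funext permAct_one,
          Set.image_id]⟩
      rw [← h2] at hmem
      exact hmem
    obtain ⟨τ, hτ⟩ := hc'mem
    set σ := Tuple.sort (pt c) with hσdef
    have hσc : StrictMono ((pt c) ∘ ⇑σ) := strictMono_sort (hptinj c)
    have hσc' : StrictMono ((pt c') ∘ ⇑σ) := by
      rw [h1]
      exact strictMono_sort (hptinj c')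
    have hx'mem : pt c' ∈ permAct τ '' connectedComponentIn MB (pt c) := by
      rw [← hτ]
      exact mem_connectedComponentIn (hptMB c')
    have hDeq := huniq σ τ (pt c) (pt c') (hptMB c) (hptMB c') (hptinj c) (hptinj c')
      hσc hσc' hx'mem
    apply Subtype.ext
    rw [hptc c, hptc c']
    have hsegD : segment ℝ (pt c) (pt c') ⊆ connectedComponentIn MB (pt c) := by
      have hmm : pt c' ∈ connectedComponentIn MB (pt c) := by
        rw [← hDeq]; exact mem_connectedComponentIn (hptMB c')
      have h1' : pt c ∈ connectedComponentIn (⋃₀ B)ᶜ (pt c) := by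
        rw [← hMBdef]; exact mem_connectedComponentIn (hptMB c)
      have h2' : pt c' ∈ connectedComponentIn (⋃₀ B)ᶜ (pt c) := by rw [← hMBdef]; exact hmm
      have := segment_subset_chamber hhyp h1' h2'
      rw [← hMBdef] at this
      exact this
    have hsegW : segment ℝ (pt c) (pt c') ⊆ {v : Fin n → ℝ | StrictMono (v ∘ ⇑σ)} :=
      (convex_weyl σ).segment_subset hσc hσc'
    have hsegMC : segment ℝ (pt c) (pt c') ⊆ MC := by
      intro y hy
      rw [hmem_MC]
      exact ⟨connectedComponentIn_subset _ _ (hsegD hy), weyl_inj (hsegW hy)⟩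
    have hsegconn : IsPreconnected (segment ℝ (pt c) (pt c')) :=
      (convex_segment (pt c) (pt c')).isPreconnected
    have hc'in : pt c' ∈ connectedComponentIn MC (pt c) :=
      hsegconn.subset_connectedComponentIn (left_mem_segment ℝ _ _) hsegMC
        (right_mem_segment ℝ _ _)
    exact connectedComponentIn_eq hc'in
  have hFsurj : Function.Surjective F := by
    rintro ⟨σ, O, hO⟩
    obtain ⟨D₀, hD₀comp, hD₀O⟩ := hO
    obtain ⟨x₀, hx₀MB, hD₀⟩ := hD₀comp
    have hD₀open : IsOpen (connectedComponentIn MB x₀) := hMBopen.connectedComponentIn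
    have hD₀ne : (connectedComponentIn MB x₀).Nonempty :=
      ⟨x₀, mem_connectedComponentIn hx₀MB⟩
    obtain ⟨y, hyD₀, hyinj⟩ := exists_inj_mem hD₀open hD₀ne
    set τ := Tuple.sort y with hτdef
    set ρ := σ * τ⁻¹ with hρdef
    set y' := permAct ρ y with hy'def
    have hyMB : y ∈ MB := connectedComponentIn_subset _ _ hyD₀
    have hy'MB : y' ∈ MB := by
      rw [hy'def, ← hMBstab ρ]
      exact Set.mem_image_of_mem _ hyMB
    have hy'inj : Function.Injective y' := by
      intro i j hij
      have h : y (ρ⁻¹ i) = y (ρ⁻¹ j) := hij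
      exact (Equiv.injective ρ⁻¹) (hyinj h)
    have hy'MC : y' ∈ MC := (hmem_MC y').mpr ⟨hy'MB, hy'inj⟩
    have hy'σ : StrictMono (y' ∘ ⇑σ) := by
      have hcomp : y' ∘ ⇑σ = y ∘ ⇑τ := by
        funext i
        show y (ρ⁻¹ (σ i)) = y (τ i)
        congr 1
        show (ρ⁻¹ * σ) i = τ i
        rw [hρdef, mul_inv_rev, inv_inv, mul_assoc, inv_mul_cancel, mul_one]
      rw [hcomp]
      exact strictMono_sort hyinj
    set c : Set (Fin n → ℝ) := connectedComponentIn MC y' with hcdef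
    have hcmem : c ∈ components MC := ⟨y', hy'MC, rfl⟩
    refine ⟨⟨c, hcmem⟩, ?_⟩
    set c' : ↥(components MC) := ⟨c, hcmem⟩ with hc'def
    have hy'c : y' ∈ connectedComponentIn MC (pt c') := by
      rw [← hptc c']
      exact mem_connectedComponentIn hy'MC
    have hptσ : StrictMono ((pt c') ∘ ⇑σ) := by
      intro i j hij
      exact ordering_const isPreconnected_connectedComponentIn (hccMC_inj (pt c'))
        hy'c (mem_connectedComponentIn (hptMC c')) (hy'σ hij)
    have hsort : Tuple.sort (pt c') = σ := sort_eq_of_strictMono (hptinj c') hptσ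
    have h1 : permAct ρ '' connectedComponentIn MB x₀ = connectedComponentIn MB y' := by
      rw [connectedComponentIn_eq hyD₀, hccIm ρ y hyMB, ← hy'def]
    have hsame : connectedComponentIn MB (pt c') = connectedComponentIn MB y' := by
      have hsub : connectedComponentIn MC (pt c') ⊆ connectedComponentIn MB (pt c') :=
        isPreconnected_connectedComponentIn.subset_connectedComponentIn
          (mem_connectedComponentIn (hptMC c'))
          ((connectedComponentIn_subset _ _).trans hMC_sub_MB)
      exact connectedComponentIn_eq (hsub hy'c)
    have horbc : {C' | ∃ σ' : Equiv.Perm (Fin n),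
        C' = permAct σ' '' connectedComponentIn MB (pt c')} = O := by
      rw [hsame, ← h1, ← hD₀]
      rw [horb_eq ρ D₀]
      rw [← hD₀O]
    have : F c' = (Tuple.sort (pt c'),
        ⟨{C' | ∃ σ' : Equiv.Perm (Fin n),
          C' = permAct σ' '' connectedComponentIn MB (pt c')},
          Set.mem_image_of_mem _ ⟨pt c', hptMB c', rfl⟩⟩) := rfl
    rw [this, hsort]
    exact congrArg _ (Subtype.ext horbc)
  have hcount := Nat.card_congr (Equiv.ofBijective F ⟨hFinj, hFsurj⟩)
  rw [Nat.card_prod] at hcount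
  rw [← Nat.card_coe_set_eq, ← Nat.card_coe_set_eq, hcount,
    Nat.card_eq_fintype_card, Fintype.card_perm, Fintype.card_fin]
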